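/- Let L ⊆ ℝ^d be a linear subspace of dimension k−1 and let a₁,…,a_k be a positive basis of L. Let L^⊥ be the orthogonal complement and π the orthogonal projection onto L^⊥. If x_{k+1},…,x_m ∈ ℝ^d satisfy pos {π(x_{k+1}),…,π(x_m)} = L^⊥, then pos {a₁,…,a_k, x_{k+1},…,x_m} = ℝ^d. -/

import Mathlib

open scoped BigOperators

/-- The positive (conic) hull of a set: all finite nonnegative linear combinations. -/
def posHull {d : ℕ} (A : Set (EuclideanSpace ℝ (Fin d))) : Set (EuclideanSpace ℝ (Fin d)) :=
  {x | ∃ (n : ℕ) (c : Fin n → ℝ) (f : Fin n → EuclideanSpace ℝ (Fin d)),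
    (∀ i, 0 ≤ c i) ∧ (∀ i, f i ∈ A) ∧ x = ∑ i, c i • f i}

lemma posHull_mono {d : ℕ} {A B : Set (EuclideanSpace ℝ (Fin d))} (h : A ⊆ B) :
    posHull A ⊆ posHull B := by
  rintro y ⟨n, c, f, hc, hf, rfl⟩
  exact ⟨n, c, f, hc, fun i => h (hf i), rfl⟩

lemma posHull_add {d : ℕ} {A : Set (EuclideanSpace ℝ (Fin d))}
    {y z : EuclideanSpace ℝ (Fin d)} (hy : y ∈ posHull A) (hz : z ∈ posHull A) :
    y + z ∈ posHull A := by
  obtain ⟨n₁, c₁, f₁, hc₁, hf₁, rfl⟩ := hy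
  obtain ⟨n₂, c₂, f₂, hc₂, hf₂, rfl⟩ := hz
  refine ⟨n₁ + n₂, Fin.addCases c₁ c₂, Fin.addCases f₁ f₂, ?_, ?_, ?_⟩
  · intro i
    induction i using Fin.addCases with
    | left i => simpa using hc₁ i
    | right i => simpa using hc₂ i
  · intro i
    induction i using Fin.addCases with
    | left i => simpa using hf₁ i
    | right i => simpa using hf₂ i
  · rw [Fin.sum_univ_add]
    simp

theorem splitting_lemma (d k m : ℕ) (L : Submodule ℝ (EuclideanSpace ℝ (Fin d)))
    (hL : Module.finrank ℝ L = k - 1)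
    (a : Fin k → EuclideanSpace ℝ (Fin d))
    (ha : posHull (Set.range a) = (L : Set (EuclideanSpace ℝ (Fin d))))
    (ha' : ∀ b ∈ Set.range a,
      posHull (Set.range a \ {b}) ≠ (L : Set (EuclideanSpace ℝ (Fin d))))
    (x : Fin m → EuclideanSpace ℝ (Fin d))
    (hx : posHull (Set.range fun j => ((Submodule.orthogonalProjectionOnto Lᗮ (x j) : Lᗮ) :
            EuclideanSpace ℝ (Fin d)))
          = (Lᗮ : Set (EuclideanSpace ℝ (Fin d)))) :
    posHull (Set.range a ∪ Set.range x) = Set.univ := by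
  refine Set.eq_univ_of_forall fun v => ?_
  set p : EuclideanSpace ℝ (Fin d) := ((Submodule.orthogonalProjectionOnto Lᗮ v : Lᗮ) : EuclideanSpace ℝ (Fin d)) with hpdef
  have hp : p ∈ posHull (Set.range fun j => ((Submodule.orthogonalProjectionOnto Lᗮ (x j) : Lᗮ) :
      EuclideanSpace ℝ (Fin d))) := by
    rw [hx]
    exact (Submodule.orthogonalProjectionOnto Lᗮ v).2
  obtain ⟨n, c, f, hc, hf, hpsum⟩ := hp
  choose g hg using hf
  set w : EuclideanSpace ℝ (Fin d) := ∑ i, c i • x (g i) with hwdef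
  have key : ∀ j, x j - ((Submodule.orthogonalProjectionOnto Lᗮ (x j) : Lᗮ) : EuclideanSpace ℝ (Fin d)) ∈ L := by
    intro j
    have := Submodule.sub_starProjection_mem_orthogonal (K := Lᗮ) (x j)
    rwa [Submodule.orthogonal_orthogonal] at this
  have h1 : v - p ∈ L := by
    have := Submodule.sub_starProjection_mem_orthogonal (K := Lᗮ) v
    rwa [Submodule.orthogonal_orthogonal] at this
  have h2 : p - w ∈ L := by
    have heq : p - w = ∑ i, c i • (f i - x (g i)) := by
      rw [hpsum, hwdef, ← Finset.sum_sub_distrib]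
      simp [smul_sub]
    rw [heq]
    refine Submodule.sum_mem _ fun i _ => Submodule.smul_mem _ _ ?_
    have : f i - x (g i) = -(x (g i) -
        ((Submodule.orthogonalProjectionOnto Lᗮ (x (g i)) : Lᗮ) : EuclideanSpace ℝ (Fin d))) := by
      rw [← hg i]; abel
    rw [this]
    exact L.neg_mem (key (g i))
  have hvw : v - w ∈ L := by
    have := L.add_mem h1 h2
    simpa using this
  have hvw' : v - w ∈ posHull (Set.range a ∪ Set.range x) := by
    apply posHull_mono Set.subset_union_left
    rw [ha]
    exact hvw
  have hw : w ∈ posHull (Set.range a ∪ Set.range x) :=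
    posHull_mono Set.subset_union_right ⟨n, c, fun i => x (g i), hc, fun i => ⟨g i, rfl⟩, rfl⟩
  have := posHull_add hvw' hw
  simpa using this
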